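/- Existence and uniqueness of the canonical decomposition: let M be a VO_n-structure, let A be a finite subset of the disjoint union of the sorts of M, and let E ⊆ M₀ be a basic-interval combination presented over A. Then E admits a canonical decomposition E = ⋃_{j∈B} I_j ∪ E₀; the finite endpoints of the intervals defining the multi-intervals I_j lie in ⟨A⟩; and the canonical decomposition is unique, i.e., if ⋃_{j∈B} I_j ∪ E₀ and ⋃_{k∈B′} I′_k ∪ E′₀ are both canonical decompositions of E, then E₀ = E′₀ and {I_j : j ∈ B} = {I′_k : k ∈ B′}. -/

import Mathlib

universe u

/-- A `VO n`-structure (for `n ≥ 1`): a sort `M0` with a distinguished element `0`, sorts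
`M i` (`i ∈ {1,…,n}`, here indexed by `Fin n`) each carrying a dense linear order without
endpoints, and injective maps `f i : M0 → M i` whose images are dense and codense in `M i`,
such that any system of nonempty open intervals (one in each sort `M i`) can be
simultaneously hit by the image of a single point of `M0`. -/
structure VO (n : ℕ) (M0 : Type u) (M : Fin n → Type u) [∀ i, LinearOrder (M i)] where
  /-- the distinguished element `0` of the sort `M0` -/
  zero : M0
  /-- the maps `fᵢ : M₀ → Mᵢ` -/
  f : ∀ i, M0 → M i
  f_inj : ∀ i, Function.Injective (f i)
  /-- each `<ᵢ` is a dense order -/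
  lt_dense : ∀ (i) (a b : M i), a < b → ∃ c, a < c ∧ c < b
  /-- no greatest element -/
  no_top : ∀ (i) (a : M i), ∃ b, a < b
  /-- no least element -/
  no_bot : ∀ (i) (a : M i), ∃ b, b < a
  /-- `fᵢ(M₀)` is `<ᵢ`-dense in `Mᵢ` -/
  image_dense : ∀ (i) (a b : M i), a < b → ∃ x : M0, a < f i x ∧ f i x < b
  /-- `fᵢ(M₀)` is `<ᵢ`-codense in `Mᵢ` -/
  image_codense : ∀ (i) (a b : M i), a < b → ∃ y : M i, a < y ∧ y < b ∧ y ∉ Set.range (f i)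
  /-- simultaneous density: axiom 5 of `VO_n` -/
  sim_dense : ∀ a b : (∀ i, M i), (∀ i, a i < b i) →
    ∃ x : M0, ∀ i, a i < f i x ∧ f i x < b i

variable {n : ℕ} {M0 : Type u} {M : Fin n → Type u} [∀ i, LinearOrder (M i)]

open Classical in
/-- The map `gᵢ : Mᵢ → M₀`, the inverse of `fᵢ` on its image and `0` elsewhere. -/
noncomputable def VO.g (V : VO n M0 M) (i : Fin n) (y : M i) : M0 :=
  if h : ∃ x, V.f i x = y then h.choose else V.zero

/-- The substructure `⟨A⟩` generated by a subset `A` of the disjoint union of the sorts: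
the smallest subset containing `A ∪ {0}` and closed under all the maps `fᵢ` and `gᵢ`. -/
inductive VO.gen (V : VO n M0 M) (A : Set (M0 ⊕ Sigma M)) : (M0 ⊕ Sigma M) → Prop
  | mem (x : M0 ⊕ Sigma M) (hx : x ∈ A) : VO.gen V A x
  | zero : VO.gen V A (Sum.inl V.zero)
  | fcl (i : Fin n) (x : M0) (hx : VO.gen V A (Sum.inl x)) :
      VO.gen V A (Sum.inr ⟨i, V.f i x⟩)
  | gcl (i : Fin n) (y : M i) (hy : VO.gen V A (Sum.inr ⟨i, y⟩)) :
      VO.gen V A (Sum.inl (V.g i y))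

/-- `I` is an open interval of the linear order `α` (allowing `±∞` as endpoints). -/
def IsOpenInterval {α : Type*} [LinearOrder α] (I : Set α) : Prop :=
  (∃ a b : α, I = Set.Ioo a b) ∨ (∃ a : α, I = Set.Ioi a) ∨ (∃ b : α, I = Set.Iio b) ∨
    I = Set.univ

/-- `I` is an open interval of `α` all of whose finite endpoints lie in `S`. -/
def EndpointsIn {α : Type*} [LinearOrder α] (I : Set α) (S : Set α) : Prop :=
  (∃ a ∈ S, ∃ b ∈ S, I = Set.Ioo a b) ∨ (∃ a ∈ S, I = Set.Ioi a) ∨ (∃ b ∈ S, I = Set.Iio b) ∨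
    I = Set.univ

/-- A multi-interval: a subset of `M₀` of the form `⋂ i, fᵢ⁻¹(Iⁱ)` where each `Iⁱ` is a
nonempty open interval of `Mᵢ`. -/
def VO.IsMultiInterval (V : VO n M0 M) (S : Set M0) : Prop :=
  ∃ I : ∀ i, Set (M i), (∀ i, IsOpenInterval (I i) ∧ (I i).Nonempty) ∧
    S = ⋂ i, V.f i ⁻¹' I i

/-- `E ⊆ M₀` is multi-open: every point of `E` lies in a multi-interval contained in `E`. -/
def VO.MultiOpen (V : VO n M0 M) (E : Set M0) : Prop :=
  ∀ e ∈ E, ∃ S : Set M0, V.IsMultiInterval S ∧ e ∈ S ∧ S ⊆ E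

/-- `I` is the maximal multi-interval in `E` containing `e`, recorded componentwise:
`e ∈ ⋂ i, fᵢ⁻¹(I i) ⊆ E`, each `I i` is an open interval, and for each sort `m`, `I m` is the
largest open interval `X` with `fₘ(e) ∈ X` for which there exist open intervals `J j` (`j > m`)
containing `f j e` with `⋂_{l<m} fₗ⁻¹(I l) ∩ fₘ⁻¹(X) ∩ ⋂_{j>m} fⱼ⁻¹(J j) ⊆ E`. -/
def VO.IsMaxMultiInterval (V : VO n M0 M) (E : Set M0) (e : M0) (I : ∀ i, Set (M i)) : Prop :=
  (∀ i, IsOpenInterval (I i)) ∧ (∀ i, V.f i e ∈ I i) ∧ (⋂ i, V.f i ⁻¹' I i) ⊆ E ∧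
  ∀ (m : Fin n) (X : Set (M m)), IsOpenInterval X → V.f m e ∈ X →
    (∃ J : ∀ j, Set (M j),
      (∀ j, m < j → IsOpenInterval (J j) ∧ V.f j e ∈ J j) ∧
      ((⋂ l, ⋂ _ : l < m, V.f l ⁻¹' I l) ∩ V.f m ⁻¹' X ∩
        ⋂ j, ⋂ _ : m < j, V.f j ⁻¹' J j) ⊆ E) →
    X ⊆ I m


/-- A basic-interval combination presented over `A`: a member of the Boolean algebra of
subsets of `M₀` generated by the singletons `{a}` with `Sum.inl a ∈ A` and the preimages
`fᵢ⁻¹(Iⁱ)` of open intervals of `Mᵢ` whose finite endpoints lie in `A ∩ Mᵢ`. -/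
inductive VO.BIC (V : VO n M0 M) (A : Set (M0 ⊕ Sigma M)) : Set M0 → Prop
  | single (a : M0) (ha : Sum.inl a ∈ A) : VO.BIC V A {a}
  | interval (i : Fin n) (I : Set (M i)) (hI : IsOpenInterval I)
      (hend : EndpointsIn I {x : M i | Sum.inr ⟨i, x⟩ ∈ A}) : VO.BIC V A (V.f i ⁻¹' I)
  | empty : VO.BIC V A ∅
  | compl (E : Set M0) (hE : VO.BIC V A E) : VO.BIC V A Eᶜ
  | union (E F : Set M0) (hE : VO.BIC V A E) (hF : VO.BIC V A F) : VO.BIC V A (E ∪ F)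

/-- `⋃_{I ∈ 𝓘} (⋂ i, fᵢ⁻¹(I i)) ∪ E₀` is a canonical decomposition of `E`:
`𝓘` is a finite set of (componentwise recorded) multi-intervals, `E₀ ⊆ E` is finite,
no element of `E₀` lies in a multi-interval contained in `E`, every `e ∈ E ∖ E₀` has some
`I ∈ 𝓘` as the maximal multi-interval in `E` containing `e`, and every `I ∈ 𝓘` is the
maximal multi-interval in `E` containing some `e ∈ E ∖ E₀`. -/
def VO.IsCanonDecomp (V : VO n M0 M) (E : Set M0)
    (𝓘 : Set (∀ i, Set (M i))) (E0 : Set M0) : Prop :=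
  𝓘.Finite ∧ E0.Finite ∧ E0 ⊆ E ∧
  (∀ I ∈ 𝓘, ∀ i, IsOpenInterval (I i) ∧ (I i).Nonempty) ∧
  E = (⋃ I ∈ 𝓘, ⋂ i, V.f i ⁻¹' I i) ∪ E0 ∧
  (∀ x ∈ E0, ¬ ∃ S : Set M0, V.IsMultiInterval S ∧ x ∈ S ∧ S ⊆ E) ∧
  (∀ e ∈ E \ E0, ∃ I ∈ 𝓘, V.IsMaxMultiInterval E e I) ∧
  (∀ I ∈ 𝓘, ∃ e ∈ E \ E0, V.IsMaxMultiInterval E e I)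

section IntervalLemmas

variable {α : Type*} [LinearOrder α]

/-- embedding of `α` into `WithBot (WithTop α)` -/
def emb (x : α) : WithBot (WithTop α) := ((x : WithTop α) : WithBot (WithTop α))

/-- the top element, as `WithBot` coe -/
def tEl (α : Type*) [LinearOrder α] : WithBot (WithTop α) := ((⊤ : WithTop α) : WithBot (WithTop α))

/-- generalized open interval -/
def oiv (a b : WithBot (WithTop α)) : Set α := {x | a < emb x ∧ emb x < b}

/-- endpoint set -/
def ebd (S : Set α) : Set (WithBot (WithTop α)) := insert ⊥ (insert (tEl α) (emb '' S))

@[simp] lemma mem_oiv {a b : WithBot (WithTop α)} {x : α} :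
    x ∈ oiv a b ↔ a < emb x ∧ emb x < b := Iff.rfl

@[simp] lemma emb_lt_emb {x y : α} : emb x < emb y ↔ x < y := by
  simp [emb]

lemma bot_lt_emb (x : α) : (⊥ : WithBot (WithTop α)) < emb x := WithBot.bot_lt_coe _

lemma emb_lt_tEl (x : α) : emb x < tEl α := WithBot.coe_lt_coe.2 (WithTop.coe_lt_top x)

lemma le_tEl (a : WithBot (WithTop α)) : a ≤ tEl α := by
  induction a using WithBot.recBotCoe with
  | bot => exact bot_le
  | coe a => exact WithBot.coe_le_coe.2 le_top

lemma bot_mem_ebd (S : Set α) : (⊥ : WithBot (WithTop α)) ∈ ebd S := Set.mem_insert _ _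

lemma tEl_mem_ebd (S : Set α) : tEl α ∈ ebd S := Set.mem_insert_of_mem _ (Set.mem_insert _ _)

lemma emb_mem_ebd {S : Set α} {s : α} (hs : s ∈ S) : emb s ∈ ebd S :=
  Set.mem_insert_of_mem _ (Set.mem_insert_of_mem _ ⟨s, hs, rfl⟩)

lemma ebd_finite {S : Set α} (h : S.Finite) : (ebd S).Finite :=
  ((h.image _).insert _).insert _

lemma oiv_inter (a b c d : WithBot (WithTop α)) :
    oiv a b ∩ oiv c d = oiv (max a c) (min b d) := by
  ext x
  simp only [Set.mem_inter_iff, mem_oiv, max_lt_iff, lt_min_iff]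
  tauto

lemma oiv_mono {a a' b b' : WithBot (WithTop α)} (ha : a' ≤ a) (hb : b ≤ b') :
    oiv a b ⊆ oiv a' b' := fun x hx => ⟨lt_of_le_of_lt ha hx.1, lt_of_lt_of_le hx.2 hb⟩

lemma oiv_union {a b c d : WithBot (WithTop α)} {x : α}
    (h1 : x ∈ oiv a b) (h2 : x ∈ oiv c d) :
    oiv a b ∪ oiv c d = oiv (min a c) (max b d) := by
  apply Set.Subset.antisymm
  · rintro y (hy | hy)
    · exact ⟨lt_of_le_of_lt (min_le_left _ _) hy.1, lt_of_lt_of_le hy.2 (le_max_left _ _)⟩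
    · exact ⟨lt_of_le_of_lt (min_le_right _ _) hy.1, lt_of_lt_of_le hy.2 (le_max_right _ _)⟩
  · rintro y ⟨hy1, hy2⟩
    rcases lt_or_ge a (emb y) with h1a | h1a
    · rcases lt_or_ge (emb y) b with h1b | h1b
      · exact Or.inl ⟨h1a, h1b⟩
      · refine Or.inr ⟨lt_of_lt_of_le (h2.1.trans (h1.2.trans_le h1b)) le_rfl, ?_⟩
        by_contra hd
        push_neg at hd
        exact absurd hy2 (not_lt.2 (max_le h1b hd))
    · refine Or.inr ⟨?_, lt_of_le_of_lt h1a (h1.1.trans h2.2)⟩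
      by_contra hc
      push_neg at hc
      exact absurd hy1 (not_lt.2 (le_min h1a hc))

lemma oiv_emb_emb (s t : α) : oiv (emb s) (emb t) = Set.Ioo s t := by
  ext y; simp [oiv, Set.mem_Ioo]

lemma oiv_bot_emb (t : α) : oiv ⊥ (emb t) = Set.Iio t := by
  ext y; simp [oiv, bot_lt_emb]

lemma oiv_emb_tEl (s : α) : oiv (emb s) (tEl α) = Set.Ioi s := by
  ext y; simp [oiv, emb_lt_tEl]

lemma oiv_bot_tEl : oiv (⊥ : WithBot (WithTop α)) (tEl α) = Set.univ := by
  ext y; simp [oiv, bot_lt_emb, emb_lt_tEl]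

lemma oiv_bot_right (a : WithBot (WithTop α)) : oiv a ⊥ = ∅ := by
  ext y; simp only [mem_oiv, Set.mem_empty_iff_false, iff_false, not_and]
  intro _; exact not_lt_bot

lemma oiv_tEl_left (b : WithBot (WithTop α)) : oiv (tEl α) b = ∅ := by
  ext y; simp only [mem_oiv, Set.mem_empty_iff_false, iff_false, not_and]
  intro h; exact absurd h (not_lt.2 (le_tEl _))

lemma isOpenInterval_oiv [Nonempty α] (a b : WithBot (WithTop α)) :
    IsOpenInterval (oiv a b) := by
  obtain ⟨x0⟩ := ‹Nonempty α›
  have hempty : IsOpenInterval (∅ : Set α) := Or.inl ⟨x0, x0, (Set.Ioo_self x0).symm⟩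
  induction a using WithBot.recBotCoe with
  | bot =>
    induction b using WithBot.recBotCoe with
    | bot => rw [oiv_bot_right]; exact hempty
    | coe b =>
      induction b using WithTop.recTopCoe with
      | top => rw [show ((⊤ : WithTop α) : WithBot (WithTop α)) = tEl α from rfl, oiv_bot_tEl]
               exact Or.inr (Or.inr (Or.inr rfl))
      | coe b => rw [show ((b : WithTop α) : WithBot (WithTop α)) = emb b from rfl, oiv_bot_emb]
                 exact Or.inr (Or.inr (Or.inl ⟨b, rfl⟩))
  | coe a =>
    induction a using WithTop.recTopCoe with
    | top => rw [show ((⊤ : WithTop α) : WithBot (WithTop α)) = tEl α from rfl, oiv_tEl_left]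
             exact hempty
    | coe a =>
      induction b using WithBot.recBotCoe with
      | bot => rw [oiv_bot_right]; exact hempty
      | coe b =>
        induction b using WithTop.recTopCoe with
        | top => rw [show ((⊤ : WithTop α) : WithBot (WithTop α)) = tEl α from rfl,
                     show ((a : WithTop α) : WithBot (WithTop α)) = emb a from rfl, oiv_emb_tEl]
                 exact Or.inr (Or.inl ⟨a, rfl⟩)
        | coe b => rw [show ((a : WithTop α) : WithBot (WithTop α)) = emb a from rfl,
                       show ((b : WithTop α) : WithBot (WithTop α)) = emb b from rfl, oiv_emb_emb]
                   exact Or.inl ⟨a, b, rfl⟩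

lemma isOpenInterval_iff [Nonempty α] {I : Set α} :
    IsOpenInterval I ↔ ∃ a b : WithBot (WithTop α), I = oiv a b := by
  constructor
  · rintro (⟨a, b, rfl⟩ | ⟨a, rfl⟩ | ⟨b, rfl⟩ | rfl)
    · exact ⟨emb a, emb b, (oiv_emb_emb a b).symm⟩
    · exact ⟨emb a, tEl α, (oiv_emb_tEl a).symm⟩
    · exact ⟨⊥, emb b, (oiv_bot_emb b).symm⟩
    · exact ⟨⊥, tEl α, oiv_bot_tEl.symm⟩
  · rintro ⟨a, b, rfl⟩
    exact isOpenInterval_oiv a b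

lemma mem_ebd_iff {S : Set α} {a : WithBot (WithTop α)} :
    a ∈ ebd S ↔ a = ⊥ ∨ a = tEl α ∨ ∃ s ∈ S, a = emb s := by
  simp only [ebd, Set.mem_insert_iff, Set.mem_image]
  constructor
  · rintro (rfl | rfl | ⟨s, hs, rfl⟩)
    · exact Or.inl rfl
    · exact Or.inr (Or.inl rfl)
    · exact Or.inr (Or.inr ⟨s, hs, rfl⟩)
  · rintro (rfl | rfl | ⟨s, hs, rfl⟩)
    · exact Or.inl rfl
    · exact Or.inr (Or.inl rfl)
    · exact Or.inr (Or.inr ⟨s, hs, rfl⟩)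

lemma endpointsIn_oiv {S : Set α} {a b : WithBot (WithTop α)}
    (ha : a ∈ ebd S) (hb : b ∈ ebd S) (hab : a < b) : EndpointsIn (oiv a b) S := by
  rcases mem_ebd_iff.1 ha with rfl | rfl | ⟨s, hs, rfl⟩ <;>
    rcases mem_ebd_iff.1 hb with rfl | rfl | ⟨t, ht, rfl⟩
  · exact absurd hab (lt_irrefl _)
  · exact Or.inr (Or.inr (Or.inr oiv_bot_tEl))
  · exact Or.inr (Or.inr (Or.inl ⟨t, ht, oiv_bot_emb t⟩))
  · exact absurd hab not_lt_bot
  · exact absurd hab (lt_irrefl _)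
  · exact absurd hab (not_lt.2 (le_tEl _))
  · exact absurd hab not_lt_bot
  · exact Or.inr (Or.inl ⟨s, hs, oiv_emb_tEl s⟩)
  · exact Or.inl ⟨s, hs, t, ht, oiv_emb_emb s t⟩

end IntervalLemmas

namespace VOAux

variable {n : ℕ} {M0 : Type u} {M : Fin n → Type u} [∀ i, LinearOrder (M i)]
  (V : VO n M0 M) (A : Set (M0 ⊕ Sigma M))

/-- the set `⟨A⟩ ∩ Mᵢ` -/
def SS (i : Fin n) : Set (M i) := {x : M i | V.gen A (Sum.inr ⟨i, x⟩)}

lemma g_f (i : Fin n) (x : M0) : V.g i (V.f i x) = x := by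
  have h : ∃ x', V.f i x' = V.f i x := ⟨x, rfl⟩
  unfold VO.g
  rw [dif_pos h]
  exact V.f_inj i h.choose_spec

lemma nonemptyM (V : VO n M0 M) (i : Fin n) : Nonempty (M i) := ⟨V.f i V.zero⟩

lemma SS_trans {z : M0} {i : Fin n} (h : V.f i z ∈ SS V A i) (j : Fin n) :
    V.f j z ∈ SS V A j := by
  have h1 : V.gen A (Sum.inl (V.g i (V.f i z))) := VO.gen.gcl i _ h
  rw [g_f] at h1
  exact VO.gen.fcl j z h1

lemma fmem_SS {a : M0} (ha : Sum.inl a ∈ A) (i : Fin n) : V.f i a ∈ SS V A i :=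
  VO.gen.fcl i a (VO.gen.mem _ ha)

/-- bound the `M0`-part of the generated substructure -/
def P0 : Set M0 :=
  insert V.zero ({a : M0 | Sum.inl a ∈ A} ∪ (fun p : Sigma M => V.g p.1 p.2) '' {p | Sum.inr p ∈ A})

lemma P0_finite (hA : A.Finite) : (P0 V A).Finite := by
  refine Set.Finite.insert _ (Set.Finite.union ?_ (Set.Finite.image _ ?_))
  · exact hA.preimage Sum.inl_injective.injOn
  · exact hA.preimage Sum.inr_injective.injOn

lemma gen_bound {z : M0 ⊕ Sigma M} (h : V.gen A z) :
    (∀ x : M0, z = Sum.inl x → x ∈ P0 V A) ∧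
    (∀ p : Sigma M, z = Sum.inr p → (Sum.inr p ∈ A ∨ ∃ x ∈ P0 V A, p.2 = V.f p.1 x)) := by
  induction h with
  | mem x hx =>
    constructor
    · rintro x' rfl
      exact Set.mem_insert_of_mem _ (Or.inl hx)
    · rintro p rfl
      exact Or.inl hx
  | zero =>
    constructor
    · rintro x' h'
      obtain rfl := Sum.inl.inj h'
      exact Set.mem_insert _ _
    · rintro p h'
      exact absurd h' (by simp)
  | fcl i x hx ih =>
    constructor
    · rintro x' h'
      exact absurd h' (by simp)
    · rintro p h'
      obtain rfl := Sum.inr.inj h'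
      exact Or.inr ⟨x, ih.1 x rfl, rfl⟩
  | gcl i y hy ih =>
    constructor
    · rintro x' h'
      obtain rfl := Sum.inl.inj h'
      rcases ih.2 ⟨i, y⟩ rfl with hmem | ⟨x, hx, hfx⟩
      · exact Set.mem_insert_of_mem _ (Or.inr ⟨⟨i, y⟩, hmem, rfl⟩)
      · have : V.g i y = x := by
          show V.g i ((⟨i, y⟩ : Sigma M).2) = x
          rw [hfx]
          exact g_f V i x
        rw [this]; exact hx
    · rintro p h'
      exact absurd h' (by simp)

lemma SS_finite (hA : A.Finite) (i : Fin n) : (SS V A i).Finite := by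
  have hsub : SS V A i ⊆ {y : M i | Sum.inr ⟨i, y⟩ ∈ A} ∪ V.f i '' P0 V A := by
    intro y hy
    rcases (gen_bound V A hy).2 ⟨i, y⟩ rfl with hmem | ⟨x, hx, hfx⟩
    · exact Or.inl hmem
    · exact Or.inr ⟨x, hx, hfx.symm⟩
  refine Set.Finite.subset (Set.Finite.union ?_ (Set.Finite.image _ (P0_finite V A hA))) hsub
  have : Function.Injective (fun y : M i => (Sum.inr ⟨i, y⟩ : M0 ⊕ Sigma M)) :=
    Sum.inr_injective.comp sigma_mk_injective
  exact hA.preimage this.injOn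

lemma F_finite (hA : A.Finite) : {x : M0 | ∃ i, V.f i x ∈ SS V A i}.Finite := by
  have hsub : {x : M0 | ∃ i, V.f i x ∈ SS V A i} ⊆ ⋃ i, V.g i '' SS V A i := by
    rintro x ⟨i, hi⟩
    exact Set.mem_iUnion.2 ⟨i, ⟨V.f i x, hi, g_f V i x⟩⟩
  exact Set.Finite.subset (Set.finite_iUnion fun i => (SS_finite V A hA i).image _) hsub

/-- basic-interval combinations only see the cell of a point (Lemma A) -/
lemma cell_invariant {E : Set M0} (hE : V.BIC A E) (hn : 1 ≤ n) {x y : M0}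
    (hxy : ∀ i, ∀ s ∈ SS V A i,
      (s < V.f i x ↔ s < V.f i y) ∧ (V.f i x < s ↔ V.f i y < s)) :
    x ∈ E ↔ y ∈ E := by
  have hyx : ∀ i, ∀ s ∈ SS V A i,
      (s < V.f i y ↔ s < V.f i x) ∧ (V.f i y < s ↔ V.f i x < s) :=
    fun i s hs => ⟨(hxy i s hs).1.symm, (hxy i s hs).2.symm⟩
  induction hE with
  | single a ha =>
    have key : ∀ u v : M0, (∀ i, ∀ s ∈ SS V A i,
        (s < V.f i u ↔ s < V.f i v) ∧ (V.f i u < s ↔ V.f i v < s)) → u = a → v = a := by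
      rintro u v huv rfl
      have i0 : Fin n := ⟨0, hn⟩
      have hs : V.f i0 u ∈ SS V A i0 := fmem_SS V A ha i0
      have h1 := (huv i0 _ hs).1
      have h2 := (huv i0 _ hs).2
      have hvu : V.f i0 v = V.f i0 u :=
        le_antisymm (not_lt.1 fun h => (lt_irrefl _ (h1.2 h)))
          (not_lt.1 fun h => (lt_irrefl _ (h2.2 h)))
      exact V.f_inj i0 hvu
    simp only [Set.mem_singleton_iff]
    exact ⟨fun hx => key x y hxy hx, fun hy => key y x hyx hy⟩
  | interval i I0 hI0 hend =>
    have hsub : {s : M i | Sum.inr ⟨i, s⟩ ∈ A} ⊆ SS V A i := fun s hs => VO.gen.mem _ hs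
    simp only [Set.mem_preimage]
    rcases hend with ⟨a, ha, b, hb, rfl⟩ | ⟨a, ha, rfl⟩ | ⟨b, hb, rfl⟩ | rfl
    · simp only [Set.mem_Ioo]
      rw [(hxy i a (hsub ha)).1, (hxy i b (hsub hb)).2]
    · simp only [Set.mem_Ioi]
      rw [(hxy i a (hsub ha)).1]
    · simp only [Set.mem_Iio]
      rw [(hxy i b (hsub hb)).2]
    · simp
  | empty => simp
  | compl E hE ih =>
    simp only [Set.mem_compl_iff]
    exact not_congr ih
  | union E F hE hF ih1 ih2 =>
    simp only [Set.mem_union]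
    exact or_congr ih1 ih2

lemma exists_Ioo_sub (V : VO n M0 M) (i : Fin n) {a b : WithBot (WithTop (M i))} (hab : a < b) :
    ∃ u v : M i, u < v ∧ ∀ y : M i, u < y → y < v → y ∈ oiv a b := by
  induction a using WithBot.recBotCoe with
  | bot =>
    induction b using WithBot.recBotCoe with
    | bot => exact absurd hab (by simp)
    | coe b =>
      induction b using WithTop.recTopCoe with
      | top =>
        obtain ⟨v, hv⟩ := V.no_top i (V.f i V.zero)
        exact ⟨_, v, hv, fun y _ _ => ⟨bot_lt_emb y, emb_lt_tEl y⟩⟩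
      | coe b =>
        obtain ⟨u, hu⟩ := V.no_bot i b
        exact ⟨u, b, hu, fun y _ h2 => ⟨bot_lt_emb y, emb_lt_emb.2 h2⟩⟩
  | coe a =>
    induction a using WithTop.recTopCoe with
    | top => exact absurd hab (not_lt.2 (le_tEl b))
    | coe a =>
      induction b using WithBot.recBotCoe with
      | bot => exact absurd hab not_lt_bot
      | coe b =>
        induction b using WithTop.recTopCoe with
        | top =>
          obtain ⟨v, hv⟩ := V.no_top i a
          exact ⟨a, v, hv, fun y h1 _ => ⟨emb_lt_emb.2 h1, emb_lt_tEl y⟩⟩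
        | coe b =>
          have hab' : a < b := by
            have := hab
            rw [show ((a : WithTop (M i)) : WithBot (WithTop (M i))) = emb a from rfl,
              show ((b : WithTop (M i)) : WithBot (WithTop (M i))) = emb b from rfl] at this
            exact emb_lt_emb.1 this
          exact ⟨a, b, hab', fun y h1 h2 => ⟨emb_lt_emb.2 h1, emb_lt_emb.2 h2⟩⟩

lemma sim_dense_oiv (a b : ∀ i, WithBot (WithTop (M i))) (hab : ∀ i, a i < b i) :
    ∃ x : M0, ∀ i, V.f i x ∈ oiv (a i) (b i) := by
  have h : ∀ i, ∃ u v : M i, u < v ∧ ∀ y : M i, u < y → y < v → y ∈ oiv (a i) (b i) :=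
    fun i => exists_Ioo_sub V i (hab i)
  choose u v huv hsub using h
  obtain ⟨x, hx⟩ := V.sim_dense u v huv
  exact ⟨x, fun i => hsub i _ (hx i).1 (hx i).2⟩

lemma exists_cell (hA : A.Finite) (i : Fin n) (y : M i) :
    ∃ c d : WithBot (WithTop (M i)), (c ∈ ebd (SS V A i) ∧ d ∈ ebd (SS V A i)) ∧
      (c < emb y ∧ emb y < d) ∧
      (∀ s ∈ ebd (SS V A i), s < emb y → s ≤ c) ∧
      (∀ s ∈ ebd (SS V A i), emb y < s → d ≤ s) := by
  obtain ⟨c, hc, hcmax⟩ := Set.exists_max_image {s ∈ ebd (SS V A i) | s < emb y} id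
    ((ebd_finite (SS_finite V A hA i)).subset (Set.sep_subset _ _))
    ⟨⊥, bot_mem_ebd _, bot_lt_emb y⟩
  obtain ⟨d, hd, hdmin⟩ := Set.exists_min_image {s ∈ ebd (SS V A i) | emb y < s} id
    ((ebd_finite (SS_finite V A hA i)).subset (Set.sep_subset _ _))
    ⟨tEl (M i), tEl_mem_ebd _, emb_lt_tEl y⟩
  exact ⟨c, d, ⟨hc.1, hd.1⟩, ⟨hc.2, hd.2⟩,
    fun s hs hsy => hcmax s ⟨hs, hsy⟩, fun s hs hys => hdmin s ⟨hs, hys⟩⟩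

lemma exists_hull (hA : A.Finite) (i : Fin n) (a b : WithBot (WithTop (M i))) :
    ∃ a' b' : WithBot (WithTop (M i)), (a' ∈ ebd (SS V A i) ∧ b' ∈ ebd (SS V A i)) ∧
      (a' ≤ a ∧ b ≤ b') ∧
      (∀ s ∈ ebd (SS V A i), s ≤ a → s ≤ a') ∧
      (∀ s ∈ ebd (SS V A i), b ≤ s → b' ≤ s) := by
  obtain ⟨a', ha', hamax⟩ := Set.exists_max_image {s ∈ ebd (SS V A i) | s ≤ a} id
    ((ebd_finite (SS_finite V A hA i)).subset (Set.sep_subset _ _))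
    ⟨⊥, bot_mem_ebd _, bot_le⟩
  obtain ⟨b', hb', hbmin⟩ := Set.exists_min_image {s ∈ ebd (SS V A i) | b ≤ s} id
    ((ebd_finite (SS_finite V A hA i)).subset (Set.sep_subset _ _))
    ⟨tEl (M i), tEl_mem_ebd _, le_tEl b⟩
  exact ⟨a', b', ⟨ha'.1, hb'.1⟩, ⟨ha'.2, hb'.2⟩,
    fun s hs hsa => hamax s ⟨hs, hsa⟩, fun s hs hbs => hbmin s ⟨hs, hbs⟩⟩

lemma gap_cell {i : Fin n} {y y' : M i} {c d : WithBot (WithTop (M i))}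
    (hy : y ∉ SS V A i)
    (hc : ∀ s ∈ ebd (SS V A i), s < emb y → s ≤ c)
    (hd : ∀ s ∈ ebd (SS V A i), emb y < s → d ≤ s)
    (hy' : y' ∈ oiv c d) :
    ∀ s ∈ SS V A i, (s < y ↔ s < y') ∧ (y < s ↔ y' < s) := by
  intro s hs
  have hsne : s ≠ y := fun h => hy (h ▸ hs)
  have hsy' : s < y → s < y' := fun h =>
    emb_lt_emb.1 (lt_of_le_of_lt (hc (emb s) (emb_mem_ebd hs) (emb_lt_emb.2 h)) hy'.1)
  have hys' : y < s → y' < s := fun h =>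
    emb_lt_emb.1 (lt_of_lt_of_le hy'.2 (hd (emb s) (emb_mem_ebd hs) (emb_lt_emb.2 h)))
  constructor
  · constructor
    · exact hsy'
    · intro h
      rcases lt_trichotomy s y with h' | h' | h'
      · exact h'
      · exact absurd h' hsne
      · exact absurd h (asymm (hys' h'))
  · constructor
    · exact hys'
    · intro h
      rcases lt_trichotomy y s with h' | h' | h'
      · exact h'
      · exact absurd h'.symm hsne
      · exact absurd h (asymm (hsy' h'))

lemma box_sub {E : Set M0} (hE : V.BIC A E) (hn : 1 ≤ n) (hA : A.Finite) {x : M0}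
    (hx : x ∈ E) (hxF : ∀ i, V.f i x ∉ SS V A i) :
    ∃ Sx : Set M0, V.IsMultiInterval Sx ∧ x ∈ Sx ∧ Sx ⊆ E := by
  have h : ∀ i, ∃ c d : WithBot (WithTop (M i)), (c < emb (V.f i x) ∧ emb (V.f i x) < d) ∧
      (∀ s ∈ ebd (SS V A i), s < emb (V.f i x) → s ≤ c) ∧
      (∀ s ∈ ebd (SS V A i), emb (V.f i x) < s → d ≤ s) := by
    intro i
    obtain ⟨c, d, _, h1, h2, h3⟩ := exists_cell V A hA i (V.f i x)
    exact ⟨c, d, h1, h2, h3⟩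
  choose c d hcd hcmax hdmin using h
  haveI : ∀ i, Nonempty (M i) := nonemptyM V
  refine ⟨⋂ i, V.f i ⁻¹' oiv (c i) (d i), ⟨fun i => oiv (c i) (d i),
    fun i => ⟨isOpenInterval_oiv _ _, ⟨V.f i x, (hcd i).1, (hcd i).2⟩⟩, rfl⟩,
    Set.mem_iInter.2 fun i => ⟨(hcd i).1, (hcd i).2⟩, ?_⟩
  intro z hz
  rw [Set.mem_iInter] at hz
  have hcz : ∀ i, ∀ s ∈ SS V A i,
      (s < V.f i x ↔ s < V.f i z) ∧ (V.f i x < s ↔ V.f i z < s) :=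
    fun i => gap_cell V A (hxF i) (hcmax i) (hdmin i) (hz i)
  exact (cell_invariant V A hE hn hcz).1 hx

/-- `X` is admissible at stage `m` for `e` relative to prefix `I`. -/
def Adm (V : VO n M0 M) (E : Set M0) (e : M0) (m : Fin n) (I : ∀ i, Set (M i))
    (X : Set (M m)) : Prop :=
  ∃ J : ∀ j, Set (M j),
    (∀ j, m < j → IsOpenInterval (J j) ∧ V.f j e ∈ J j) ∧
    ((⋂ l, ⋂ _ : l < m, V.f l ⁻¹' I l) ∩ V.f m ⁻¹' X ∩
      ⋂ j, ⋂ _ : m < j, V.f j ⁻¹' J j) ⊆ E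

lemma adm_congr {V : VO n M0 M} {E : Set M0} {e : M0} {m : Fin n} {I I' : ∀ i, Set (M i)}
    {X : Set (M m)} (hII' : ∀ l, l < m → I l = I' l) (h : Adm V E e m I X) :
    Adm V E e m I' X := by
  obtain ⟨J, hJ, hsub⟩ := h
  refine ⟨J, hJ, ?_⟩
  have : (⋂ l, ⋂ _ : l < m, V.f l ⁻¹' I' l) = (⋂ l, ⋂ _ : l < m, V.f l ⁻¹' I l) := by
    apply Set.iInter_congr
    intro l
    apply Set.iInter_congr
    intro hl
    rw [hII' l hl]
  rw [this]
  exact hsub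

lemma adm_union (V : VO n M0 M) {E : Set M0} {e : M0} {m : Fin n} {I : ∀ i, Set (M i)}
    {X Y : Set (M m)} (hX : Adm V E e m I X) (hY : Adm V E e m I Y) :
    Adm V E e m I (X ∪ Y) := by
  obtain ⟨J1, hJ1, hJ1sub⟩ := hX
  obtain ⟨J2, hJ2, hJ2sub⟩ := hY
  haveI : ∀ i, Nonempty (M i) := nonemptyM V
  refine ⟨fun j => J1 j ∩ J2 j, fun j hj => ⟨?_, (hJ1 j hj).2, (hJ2 j hj).2⟩, ?_⟩
  · show IsOpenInterval (J1 j ∩ J2 j)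
    obtain ⟨a, b, h1⟩ := isOpenInterval_iff.1 (hJ1 j hj).1
    obtain ⟨c, d, h2⟩ := isOpenInterval_iff.1 (hJ2 j hj).1
    rw [h1, h2, oiv_inter]
    exact isOpenInterval_oiv _ _
  · rintro z ⟨⟨hz1, hz2⟩, hz3⟩
    simp only [Set.mem_iInter, Set.mem_preimage, Set.mem_inter_iff] at hz1 hz3
    rcases hz2 with h | h
    · apply hJ1sub
      refine ⟨⟨?_, h⟩, ?_⟩
      · simp only [Set.mem_iInter, Set.mem_preimage]; exact hz1
      · simp only [Set.mem_iInter, Set.mem_preimage]; exact fun j hj => (hz3 j hj).1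
    · apply hJ2sub
      refine ⟨⟨?_, h⟩, ?_⟩
      · simp only [Set.mem_iInter, Set.mem_preimage]; exact hz1
      · simp only [Set.mem_iInter, Set.mem_preimage]; exact fun j hj => (hz3 j hj).2

/-- Key extension lemma: an admissible interval can be enlarged to the surrounding
interval with endpoints in the generated substructure. -/
lemma adm_hull (V : VO n M0 M) (A : Set (M0 ⊕ Sigma M)) (hn : 1 ≤ n) {E : Set M0}
    (hE : V.BIC A E) (hA : A.Finite) {e : M0} {m : Fin n} {I : ∀ i, Set (M i)}
    (hIopen : ∀ l, IsOpenInterval (I l)) (hIe : ∀ l, V.f l e ∈ I l)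
    {a b a' b' : WithBot (WithTop (M m))}
    (hea : V.f m e ∈ oiv a b)
    (hamax : ∀ s ∈ ebd (SS V A m), s ≤ a → s ≤ a')
    (hbmin : ∀ s ∈ ebd (SS V A m), b ≤ s → b' ≤ s)
    (hadm : Adm V E e m I (oiv a b)) :
    Adm V E e m I (oiv a' b') := by
  haveI : ∀ i, Nonempty (M i) := nonemptyM V
  obtain ⟨J, hJ, hJsub⟩ := hadm
  refine ⟨J, hJ, ?_⟩
  rintro z ⟨⟨hz1, hz2⟩, hz3⟩
  have hz1' : ∀ l, l < m → V.f l z ∈ I l := by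
    simp only [Set.mem_iInter, Set.mem_preimage] at hz1; exact hz1
  have hz3' : ∀ j, m < j → V.f j z ∈ J j := by
    simp only [Set.mem_iInter, Set.mem_preimage] at hz3; exact hz3
  rw [Set.mem_preimage, mem_oiv] at hz2
  by_cases hzF : ∃ i, V.f i z ∈ SS V A i
  · -- all coordinates of z lie in the substructure; z lies in the original set
    obtain ⟨i0, hi0⟩ := hzF
    have hall : ∀ j, V.f j z ∈ SS V A j := SS_trans V A hi0
    have hmm : V.f m z ∈ oiv a b := by
      constructor
      · by_contra h
        push_neg at h
        exact absurd hz2.1 (not_lt.2 (hamax _ (emb_mem_ebd (hall m)) h))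
      · by_contra h
        push_neg at h
        exact absurd hz2.2 (not_lt.2 (hbmin _ (emb_mem_ebd (hall m)) h))
    exact hJsub ⟨⟨hz1, hmm⟩, hz3⟩
  · push_neg at hzF
    -- cells around the coordinates of z
    have hc : ∀ i, ∃ c d : WithBot (WithTop (M i)),
        (c < emb (V.f i z) ∧ emb (V.f i z) < d) ∧
        (c ∈ ebd (SS V A i) ∧ d ∈ ebd (SS V A i)) ∧
        (∀ s ∈ ebd (SS V A i), s < emb (V.f i z) → s ≤ c) ∧
        (∀ s ∈ ebd (SS V A i), emb (V.f i z) < s → d ≤ s) := by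
      intro i
      obtain ⟨c, d, h1, h2, h3, h4⟩ := exists_cell V A hA i (V.f i z)
      exact ⟨c, d, h2, h1, h3, h4⟩
    choose c d hcd hcdmem hcmax hdmin using hc
    have key : ∀ i, ∃ u v : WithBot (WithTop (M i)), u < v ∧
        oiv u v ⊆ oiv (c i) (d i) ∧
        (∀ _ : i < m, oiv u v ⊆ I i) ∧
        (∀ hi : i = m, ∀ y, y ∈ oiv u v → (hi ▸ y) ∈ oiv a b) ∧
        (∀ _ : m < i, oiv u v ⊆ J i) := by
      intro i
      rcases lt_trichotomy i m with hlt | heq | hgt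
      · obtain ⟨p, q, hpq⟩ := isOpenInterval_iff.1 (hIopen i)
        have hzi : V.f i z ∈ oiv p q := hpq ▸ hz1' i hlt
        refine ⟨max p (c i), min q (d i),
          lt_trans (max_lt hzi.1 (hcd i).1) (lt_min hzi.2 (hcd i).2), ?_, ?_, ?_, ?_⟩
        · rw [← oiv_inter]; exact Set.inter_subset_right
        · intro _; rw [← oiv_inter, hpq]; exact Set.inter_subset_left
        · intro hi; exact absurd hi (Fin.ne_of_lt hlt)
        · intro hi; exact absurd hi (not_lt.2 (le_of_lt hlt))
      · subst heq
        have had : a < d i := by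
          by_contra h
          push_neg at h
          exact absurd ((hcd i).2.trans_le (hamax _ (hcdmem i).2 h)) (not_lt.2 hz2.1.le)
        have hcb : c i < b := by
          by_contra h
          push_neg at h
          exact absurd ((hbmin _ (hcdmem i).1 h).trans_lt (hcd i).1) (not_lt.2 hz2.2.le)
        have hab : a < b := lt_trans hea.1 hea.2
        refine ⟨max a (c i), min b (d i), ?_, ?_, ?_, ?_, ?_⟩
        · simp only [lt_min_iff, max_lt_iff]
          exact ⟨⟨hab, hcb⟩, ⟨had, (hcd i).1.trans (hcd i).2⟩⟩
        · rw [← oiv_inter]; exact Set.inter_subset_right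
        · intro h; exact absurd h (lt_irrefl i)
        · intro hi y hy
          have : y ∈ oiv a b := (oiv_inter a b (c i) (d i) ▸ Set.inter_subset_left) hy
          exact this
        · intro h; exact absurd h (lt_irrefl i)
      · refine ?_
        have hJi := hJ i hgt
        obtain ⟨p, q, hpq⟩ := isOpenInterval_iff.1 hJi.1
        have hzi : V.f i z ∈ oiv p q := hpq ▸ hz3' i hgt
        refine ⟨max p (c i), min q (d i),
          lt_trans (max_lt hzi.1 (hcd i).1) (lt_min hzi.2 (hcd i).2), ?_, ?_, ?_, ?_⟩
        · rw [← oiv_inter]; exact Set.inter_subset_right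
        · intro hi; exact absurd hi (not_lt.2 (le_of_lt hgt))
        · intro hi; exact absurd hi (Fin.ne_of_gt hgt)
        · intro _; rw [← oiv_inter, hpq]; exact Set.inter_subset_left
    choose u v huv hsubc hsubI hsubM hsubJ using key
    obtain ⟨w, hw⟩ := sim_dense_oiv V u v huv
    have hwE : w ∈ E := by
      apply hJsub
      refine ⟨⟨?_, ?_⟩, ?_⟩
      · simp only [Set.mem_iInter, Set.mem_preimage]
        exact fun l hl => hsubI l hl (hw l)
      · exact hsubM m rfl _ (hw m)
      · simp only [Set.mem_iInter, Set.mem_preimage]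
        exact fun j hj => hsubJ j hj (hw j)
    have hcz : ∀ i, ∀ s ∈ SS V A i,
        (s < V.f i z ↔ s < V.f i w) ∧ (V.f i z < s ↔ V.f i w < s) :=
      fun i => gap_cell V A (hzF i) (hcmax i) (hdmin i) (hsubc i (hw i))
    exact (cell_invariant V A hE hn hcz).2 hwE

lemma sUnion_adm (V : VO n M0 M) (A : Set (M0 ⊕ Sigma M)) {E : Set M0} {e : M0}
    {m : Fin n} {I : ∀ i, Set (M i)} {𝒳 : Set (Set (M m))} (h𝒳 : 𝒳.Finite) :
    (∀ X ∈ 𝒳, (∃ a ∈ ebd (SS V A m), ∃ b ∈ ebd (SS V A m), X = oiv a b) ∧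
      V.f m e ∈ X ∧ Adm V E e m I X) → 𝒳.Nonempty →
    ((∃ a ∈ ebd (SS V A m), ∃ b ∈ ebd (SS V A m), ⋃₀ 𝒳 = oiv a b) ∧
      V.f m e ∈ ⋃₀ 𝒳 ∧ Adm V E e m I (⋃₀ 𝒳)) := by
  refine Set.Finite.induction_on 𝒳 h𝒳 (fun _ hne => absurd hne (by simp)) ?_
  rintro X s hXs hs ih hmem hne
  rcases s.eq_empty_or_nonempty with rfl | hsne
  · rw [Set.sUnion_insert, Set.sUnion_empty, Set.union_empty]
    exact hmem X (Set.mem_insert _ _)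
  · obtain ⟨⟨a', ha', b', hb', hrep'⟩, hmem', hadm'⟩ :=
      ih (fun Y hY => hmem Y (Set.mem_insert_of_mem _ hY)) hsne
    obtain ⟨⟨a, ha, b, hb, hrep⟩, hmemX, hadmX⟩ := hmem X (Set.mem_insert _ _)
    rw [Set.sUnion_insert]
    have hu : X ∪ ⋃₀ s = oiv (min a a') (max b b') := by
      rw [hrep, hrep']
      exact oiv_union (hrep ▸ hmemX) (hrep' ▸ hmem')
    refine ⟨⟨min a a', ?_, max b b', ?_, hu⟩, Or.inl hmemX, adm_union V hadmX hadm'⟩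
    · rcases min_choice a a' with h | h <;> rw [h]
      exacts [ha, ha']
    · rcases max_choice b b' with h | h <;> rw [h]
      exacts [hb, hb']

/-- the stage-`k` invariant of the recursive construction of the maximal multi-interval -/
def Stage (V : VO n M0 M) (A : Set (M0 ⊕ Sigma M)) (E : Set M0) (e : M0) (k : ℕ)
    (I : ∀ i, Set (M i)) : Prop :=
  (∀ i, IsOpenInterval (I i) ∧ V.f i e ∈ I i) ∧
  (∀ m : Fin n, m.val < k → ∃ a ∈ ebd (SS V A m), ∃ b ∈ ebd (SS V A m), I m = oiv a b) ∧
  (∀ m : Fin n, m.val < k →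
    ∀ X : Set (M m), IsOpenInterval X → V.f m e ∈ X → Adm V E e m I X → X ⊆ I m) ∧
  ∃ J : ∀ j, Set (M j),
    (∀ j : Fin n, k ≤ j.val → IsOpenInterval (J j) ∧ V.f j e ∈ J j) ∧
    (((⋂ l : Fin n, ⋂ _ : l.val < k, V.f l ⁻¹' I l) ∩
      ⋂ j : Fin n, ⋂ _ : k ≤ j.val, V.f j ⁻¹' J j) ⊆ E)

lemma stage_zero {E : Set M0} {e : M0} {T : ∀ i, Set (M i)}
    (hT : ∀ i, IsOpenInterval (T i)) (heT : ∀ i, V.f i e ∈ T i)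
    (hTsub : (⋂ i, V.f i ⁻¹' T i) ⊆ E) :
    Stage V A E e 0 (fun _ => Set.univ) := by
  refine ⟨fun i => ⟨Or.inr (Or.inr (Or.inr rfl)), Set.mem_univ _⟩,
    fun m hm => absurd hm (by omega), fun m hm => absurd hm (by omega), T,
    fun j _ => ⟨hT j, heT j⟩, ?_⟩
  rintro z ⟨_, hz⟩
  apply hTsub
  simp only [Set.mem_iInter, Set.mem_preimage] at hz ⊢
  exact fun i => hz i (Nat.zero_le _)

lemma stage_succ (hn : 1 ≤ n) {E : Set M0} (hE : V.BIC A E) (hA : A.Finite)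
    {e : M0} {k : ℕ} {I : ∀ i, Set (M i)}
    (hS : Stage V A E e k I) (hk : k < n) : ∃ I', Stage V A E e (k + 1) I' := by
  classical
  haveI : ∀ i, Nonempty (M i) := nonemptyM V
  obtain ⟨hopen, hrep, hmax, J, hJ, hJsub⟩ := hS
  set m : Fin n := ⟨k, hk⟩ with hmdef
  have hJmadm : Adm V E e m I (J m) := by
    refine ⟨J, fun j hj => hJ j (le_of_lt hj), ?_⟩
    rintro z ⟨⟨hz1, hz2⟩, hz3⟩
    apply hJsub
    simp only [Set.mem_iInter, Set.mem_preimage] at hz1 hz3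
    rw [Set.mem_preimage] at hz2
    refine ⟨?_, ?_⟩
    · simp only [Set.mem_iInter, Set.mem_preimage]
      exact fun l hl => hz1 l hl
    · simp only [Set.mem_iInter, Set.mem_preimage]
      intro j hj
      rcases Nat.eq_or_lt_of_le hj with heq | hlt
      · have hjm : j = m := Fin.ext heq.symm
        subst hjm
        exact hz2
      · exact hz3 j hlt
  set 𝒳 : Set (Set (M m)) := {X | (∃ a ∈ ebd (SS V A m), ∃ b ∈ ebd (SS V A m), X = oiv a b) ∧
    V.f m e ∈ X ∧ Adm V E e m I X} with h𝒳def
  have hfin : 𝒳.Finite := by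
    apply Set.Finite.subset
      ((ebd_finite (SS_finite V A hA m)).image2 oiv (ebd_finite (SS_finite V A hA m)))
    rintro X ⟨⟨a, ha, b, hb, rfl⟩, -⟩
    exact Set.mem_image2_of_mem ha hb
  obtain ⟨p, q, hJm⟩ := isOpenInterval_iff.1 (hJ m (le_refl k)).1
  have hemem : V.f m e ∈ oiv p q := hJm ▸ (hJ m (le_refl k)).2
  obtain ⟨a', b', ⟨ha'mem, hb'mem⟩, ⟨ha'p, hqb'⟩, hamax, hbmin⟩ := exists_hull V A hA m p q
  have hHadm : Adm V E e m I (oiv a' b') :=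
    adm_hull V A hn hE hA (fun l => (hopen l).1) (fun l => (hopen l).2)
      hemem hamax hbmin (hJm ▸ hJmadm)
  have hX0 : oiv a' b' ∈ 𝒳 :=
    ⟨⟨a', ha'mem, b', hb'mem, rfl⟩, oiv_mono ha'p hqb' hemem, hHadm⟩
  obtain ⟨⟨al, hal, be, hbe, hUrep⟩, hUmem, hUadm⟩ :=
    sUnion_adm V A hfin (fun X hX => hX) ⟨_, hX0⟩
  refine ⟨Function.update I m (⋃₀ 𝒳), ?_, ?_, ?_, ?_⟩
  · intro i
    by_cases hi : i = m
    · subst hi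
      rw [Function.update_self]
      exact ⟨hUrep ▸ isOpenInterval_oiv al be, hUmem⟩
    · rw [Function.update_of_ne hi]
      exact hopen i
  · intro m' hm'
    by_cases hi : m' = m
    · subst hi
      rw [Function.update_self]
      exact ⟨al, hal, be, hbe, hUrep⟩
    · have hm'k : m'.val < k := by
        rcases Nat.lt_succ_iff_lt_or_eq.1 hm' with h | h
        · exact h
        · exact absurd (Fin.ext h : m' = m) hi
      rw [Function.update_of_ne hi]
      exact hrep m' hm'k
  · intro m' hm' X hXopen hXe hXadm
    by_cases hi : m' = m
    · subst hi
      have hXadm' : Adm V E e m I X :=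
        adm_congr (fun l hl => Function.update_of_ne (Fin.ne_of_lt hl) _ _) hXadm
      obtain ⟨x1, x2, hXrep⟩ := isOpenInterval_iff.1 hXopen
      obtain ⟨x1', x2', ⟨hx1mem, hx2mem⟩, ⟨hx1le, hx2le⟩, hxamax, hxbmin⟩ :=
        exists_hull V A hA m x1 x2
      have hhull : Adm V E e m I (oiv x1' x2') :=
        adm_hull V A hn hE hA (fun l => (hopen l).1) (fun l => (hopen l).2)
          (hXrep ▸ hXe) hxamax hxbmin (hXrep ▸ hXadm')
      have hmemhull : V.f m e ∈ oiv x1' x2' := oiv_mono hx1le hx2le (hXrep ▸ hXe)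
      have hhX : oiv x1' x2' ∈ 𝒳 := ⟨⟨x1', hx1mem, x2', hx2mem, rfl⟩, hmemhull, hhull⟩
      rw [hXrep, Function.update_self]
      exact (oiv_mono hx1le hx2le).trans (Set.subset_sUnion_of_mem hhX)
    · have hm'k : m'.val < k := by
        rcases Nat.lt_succ_iff_lt_or_eq.1 hm' with h | h
        · exact h
        · exact absurd (Fin.ext h : m' = m) hi
      have hm'm : m' < m := hm'k
      have hXadm' : Adm V E e m' I X :=
        adm_congr (fun l hl => Function.update_of_ne (Fin.ne_of_lt (hl.trans hm'm)) _ _) hXadm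
      rw [Function.update_of_ne hi]
      exact hmax m' hm'k X hXopen hXe hXadm'
  · obtain ⟨Jw, hJw, hJwsub⟩ := hUadm
    refine ⟨Jw, fun j hj => hJw j hj, ?_⟩
    rintro z ⟨hz1, hz2⟩
    apply hJwsub
    simp only [Set.mem_iInter, Set.mem_preimage] at hz1 hz2
    refine ⟨⟨?_, ?_⟩, ?_⟩
    · simp only [Set.mem_iInter, Set.mem_preimage]
      intro l hl
      have h := hz1 l (Nat.lt_succ_of_lt hl)
      rwa [Function.update_of_ne (Fin.ne_of_lt hl)] at h
    · have h := hz1 m (Nat.lt_succ_self k)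
      rw [Function.update_self] at h
      exact h
    · simp only [Set.mem_iInter, Set.mem_preimage]
      exact fun j hj => hz2 j hj

lemma exists_maxMI (hn : 1 ≤ n) {E : Set M0} (hE : V.BIC A E) (hA : A.Finite) {e : M0}
    (he : ∃ S : Set M0, V.IsMultiInterval S ∧ e ∈ S ∧ S ⊆ E) :
    ∃ I : ∀ i, Set (M i), V.IsMaxMultiInterval E e I ∧
      ∀ i, ∃ a ∈ ebd (SS V A i), ∃ b ∈ ebd (SS V A i), I i = oiv a b := by
  obtain ⟨S, ⟨T, hT, rfl⟩, heS, hSE⟩ := he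
  have heT : ∀ i, V.f i e ∈ T i := fun i => Set.mem_iInter.1 heS i
  have h0 : Stage V A E e 0 (fun _ => Set.univ) :=
    stage_zero V A (fun i => (hT i).1) heT hSE
  have hstep : ∀ k, k ≤ n → ∃ I, Stage V A E e k I := by
    intro k
    induction k with
    | zero => exact fun _ => ⟨_, h0⟩
    | succ k ih =>
      intro hk
      obtain ⟨I, hI⟩ := ih (Nat.le_of_succ_le hk)
      exact stage_succ V A hn hE hA hI hk
  obtain ⟨I, hopen, hrep, hmax, J, hJ, hJsub⟩ := hstep n le_rfl
  refine ⟨I, ⟨fun i => (hopen i).1, fun i => (hopen i).2, ?_,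
    fun m X hX1 hX2 hX3 => hmax m m.isLt X hX1 hX2 hX3⟩, fun i => hrep i i.isLt⟩
  intro z hz
  apply hJsub
  refine ⟨?_, ?_⟩
  · simp only [Set.mem_iInter, Set.mem_preimage] at hz ⊢
    exact fun l _ => hz l
  · simp only [Set.mem_iInter]
    exact fun j hj => absurd j.isLt (not_lt.2 hj)

lemma maxMI_subset (V : VO n M0 M) {E : Set M0} {e : M0} {I I' : ∀ i, Set (M i)}
    (h : V.IsMaxMultiInterval E e I) (h' : V.IsMaxMultiInterval E e I')
    {m : Fin n} (ih : ∀ l, l < m → I l = I' l) : I' m ⊆ I m := by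
  obtain ⟨hop, hmem, hsub, hmax⟩ := h
  obtain ⟨hop', hmem', hsub', hmax'⟩ := h'
  refine hmax m (I' m) (hop' m) (hmem' m) ⟨I', fun j hj => ⟨hop' j, hmem' j⟩, ?_⟩
  rintro z ⟨⟨hz1, hz2⟩, hz3⟩
  apply hsub'
  simp only [Set.mem_iInter, Set.mem_preimage] at hz1 hz3 ⊢
  rw [Set.mem_preimage] at hz2
  intro i
  rcases lt_trichotomy i m with hlt | heq | hgt
  · rw [← ih i hlt]
    exact hz1 i hlt
  · subst heq
    exact hz2
  · exact hz3 i hgt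

lemma maxMI_unique (V : VO n M0 M) {E : Set M0} {e : M0} {I I' : ∀ i, Set (M i)}
    (h : V.IsMaxMultiInterval E e I) (h' : V.IsMaxMultiInterval E e I') : I = I' := by
  have key : ∀ k : ℕ, ∀ m : Fin n, m.val = k → I m = I' m := by
    intro k
    induction k using Nat.strong_induction_on with
    | _ k ihk =>
      intro m hm
      have ih : ∀ l, l < m → I l = I' l := fun l hl => ihk l.val (hm ▸ hl) l rfl
      exact Set.Subset.antisymm
        (maxMI_subset V h' h fun l hl => (ih l hl).symm)
        (maxMI_subset V h h' ih)
  funext m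
  exact key m.val m rfl

end VOAux


/-- Existence and uniqueness of the canonical decomposition: a basic-interval
combination `E ⊆ M₀` presented over a finite set `A` admits a canonical decomposition
`E = ⋃_{I ∈ 𝓘} (⋂ i, fᵢ⁻¹(I i)) ∪ E₀` whose intervals have their finite endpoints in `⟨A⟩`,
and any two canonical decompositions of `E` coincide. -/
theorem VO.canonDecomp_exists_unique {n : ℕ} (hn : 1 ≤ n)
    {M0 : Type u} {M : Fin n → Type u} [∀ i, LinearOrder (M i)]
    (V : VO n M0 M) (A : Set (M0 ⊕ Sigma M)) (hA : A.Finite)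
    (E : Set M0) (hE : V.BIC A E) :
    (∃ (𝓘 : Set (∀ i, Set (M i))) (E0 : Set M0), V.IsCanonDecomp E 𝓘 E0 ∧
      ∀ I ∈ 𝓘, ∀ i, EndpointsIn (I i) {x : M i | V.gen A (Sum.inr ⟨i, x⟩)}) ∧
    (∀ (𝓘 𝓘' : Set (∀ i, Set (M i))) (E0 E0' : Set M0),
      V.IsCanonDecomp E 𝓘 E0 → V.IsCanonDecomp E 𝓘' E0' → E0 = E0' ∧ 𝓘 = 𝓘') := by
  classical
  open VOAux in
  constructor
  · -- existence
    set E0 : Set M0 := {x | x ∈ E ∧ ¬ ∃ S : Set M0, V.IsMultiInterval S ∧ x ∈ S ∧ S ⊆ E}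
      with hE0def
    set 𝓘 : Set (∀ i, Set (M i)) := {I | (∀ i, ∃ a ∈ ebd (VOAux.SS V A i),
      ∃ b ∈ ebd (VOAux.SS V A i), I i = oiv a b) ∧
      ∃ e, (e ∈ E \ E0) ∧ V.IsMaxMultiInterval E e I} with h𝓘def
    have hmaxex : ∀ e ∈ E \ E0, ∃ I ∈ 𝓘, V.IsMaxMultiInterval E e I := by
      intro e he
      have hmi : ∃ S : Set M0, V.IsMultiInterval S ∧ e ∈ S ∧ S ⊆ E := by
        by_contra h
        exact he.2 ⟨he.1, h⟩
      obtain ⟨I, hI, hrep⟩ := VOAux.exists_maxMI V A hn hE hA hmi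
      exact ⟨I, ⟨hrep, e, he, hI⟩, hI⟩
    refine ⟨𝓘, E0, ⟨?_, ?_, fun x hx => hx.1, ?_, ?_, fun x hx => hx.2, hmaxex,
      fun I hI => hI.2⟩, ?_⟩
    · apply Set.Finite.subset (Set.Finite.pi (fun i =>
        ((ebd_finite (VOAux.SS_finite V A hA i)).image2 oiv
          (ebd_finite (VOAux.SS_finite V A hA i)))))
      rintro I ⟨hrep, -⟩
      rw [Set.mem_univ_pi]
      intro i
      obtain ⟨a, ha, b, hb, h⟩ := hrep i
      exact h ▸ Set.mem_image2_of_mem ha hb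
    · apply Set.Finite.subset (VOAux.F_finite V A hA)
      intro x hx
      by_contra hxF
      have hxF' : ∀ i, V.f i x ∉ VOAux.SS V A i := by
        intro i hi
        exact hxF ⟨i, hi⟩
      exact hx.2 (VOAux.box_sub V A hE hn hA hx.1 hxF')
    · rintro I ⟨hrep, e, he, hI⟩ i
      exact ⟨hI.1 i, ⟨V.f i e, hI.2.1 i⟩⟩
    · apply Set.Subset.antisymm
      · intro x hx
        by_cases hx0 : x ∈ E0
        · exact Or.inr hx0
        · obtain ⟨I, hI𝓘, hI⟩ := hmaxex x ⟨hx, hx0⟩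
          exact Or.inl (Set.mem_biUnion hI𝓘 (Set.mem_iInter.2 fun i => hI.2.1 i))
      · rintro x (hx | hx)
        · obtain ⟨I, hI𝓘, hxI⟩ := Set.mem_iUnion₂.1 hx
          obtain ⟨e, he, hI⟩ := hI𝓘.2
          exact hI.2.2.1 hxI
        · exact hx.1
    · rintro I ⟨hrep, e, he, hI⟩ i
      obtain ⟨a, ha, b, hb, hIi⟩ := hrep i
      have hab : a < b := by
        have h := hI.2.1 i
        rw [hIi] at h
        exact lt_trans h.1 h.2
      rw [hIi]
      exact endpointsIn_oiv ha hb hab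
  · rintro 𝓘 𝓘' E0 E0' ⟨-, -, hE0sub, -, -, hnomi, hmaxf, hrev⟩
      ⟨-, -, hE0sub', -, -, hnomi', hmaxf', hrev'⟩
    have hsub1 : E0 ⊆ E0' := by
      intro x hx
      by_contra hx0
      obtain ⟨I, hI𝓘, hI⟩ := hmaxf' x ⟨hE0sub hx, hx0⟩
      exact hnomi x hx ⟨⋂ i, V.f i ⁻¹' I i,
        ⟨I, fun i => ⟨hI.1 i, ⟨V.f i x, hI.2.1 i⟩⟩, rfl⟩,
        Set.mem_iInter.2 (fun i => hI.2.1 i), hI.2.2.1⟩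
    have hsub2 : E0' ⊆ E0 := by
      intro x hx
      by_contra hx0
      obtain ⟨I, hI𝓘, hI⟩ := hmaxf x ⟨hE0sub' hx, hx0⟩
      exact hnomi' x hx ⟨⋂ i, V.f i ⁻¹' I i,
        ⟨I, fun i => ⟨hI.1 i, ⟨V.f i x, hI.2.1 i⟩⟩, rfl⟩,
        Set.mem_iInter.2 (fun i => hI.2.1 i), hI.2.2.1⟩
    have hE0eq : E0 = E0' := Set.Subset.antisymm hsub1 hsub2
    refine ⟨hE0eq, Set.Subset.antisymm ?_ ?_⟩
    · intro I hI
      obtain ⟨e, he, hmaxI⟩ := hrev I hI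
      have he' : e ∈ E \ E0' := by rw [← hE0eq]; exact he
      obtain ⟨I', hI'mem, hmaxI'⟩ := hmaxf' e he'
      rwa [VOAux.maxMI_unique V hmaxI hmaxI']
    · intro I hI
      obtain ⟨e, he, hmaxI⟩ := hrev' I hI
      have he' : e ∈ E \ E0 := by rw [hE0eq]; exact he
      obtain ⟨I', hI'mem, hmaxI'⟩ := hmaxf e he'
      rwa [VOAux.maxMI_unique V hmaxI hmaxI']
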